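/- For every λ ∈ ℍ with λ ≠ o, the complement ℍ \ L_λ has exactly two connected components, one containing o and one containing λ; and a point z ∈ ℍ \ L_λ lies in the component containing λ (equivalently, L_λ separates o from z) if and only if d(z,λ) < d(z,o). -/

import Mathlib

noncomputable section

open UpperHalfPlane MeasureTheory Topology Filter Metric Set Pointwise

local notation "SL2R" => Matrix.SpecialLinearGroup (Fin 2) ℝ

/-- The matrix topology on `SL(2,ℝ)`, induced from the space of `2 × 2` real matrices. -/
instance : TopologicalSpace SL2R :=
  TopologicalSpace.induced (fun g => (g : Matrix (Fin 2) (Fin 2) ℝ)) inferInstance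

/-- The basepoint `o = i` of the upper half-plane. -/
def o : ℍ := UpperHalfPlane.I

/-- A subgroup of `SL(2,ℝ)` is cocompact if the translates of some compact set cover `ℍ`. -/
def IsCocompact (Γ : Subgroup SL2R) : Prop :=
  ∃ K : Set ℍ, IsCompact K ∧ ⋃ γ : Γ, (γ : SL2R) • K = Set.univ

/-- The orbit `Λ = Γ • o` of the basepoint. -/
def orbitO (Γ : Subgroup SL2R) : Set ℍ := {z : ℍ | ∃ γ ∈ Γ, γ • o = z}

/-- The focal counting function `υ(z) = #{λ ∈ Λ | λ ≠ o, d(z,λ) = d(z,o)}`. -/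
def upsilon (Γ : Subgroup SL2R) (z : ℍ) : ℕ :=
  {l : ℍ | l ∈ orbitO Γ ∧ l ≠ o ∧ dist z l = dist z o}.ncard

/-- The Brillouin index `B(z) = #{λ ∈ Λ | d(z,λ) ≤ d(z,o)}`. -/
def brillouinIndex (Γ : Subgroup SL2R) (z : ℍ) : ℕ :=
  {l : ℍ | l ∈ orbitO Γ ∧ dist z l ≤ dist z o}.ncard

/-- The `k`-th Brillouin set `B_k = {z | B(z) = k}`. -/
def brillouinSet (Γ : Subgroup SL2R) (k : ℕ) : Set ℍ := {z : ℍ | brillouinIndex Γ z = k}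

/-- The perpendicular bisector `L_λ = {z | d(z,o) = d(z,λ)}`. -/
def bisector (l : ℍ) : Set ℍ := {z : ℍ | dist z o = dist z l}

namespace BisectorAux

/-- Geodesic along a half-circle of center `c` and radius `r` in the upper half-plane. -/
def circGeo (c r : ℝ) (hr : 0 < r) : ℝ → ℍ :=
  fun s => UpperHalfPlane.mk ⟨c - r * Real.tanh s, r / Real.cosh s⟩
    (div_pos hr (Real.cosh_pos s))

theorem circGeo_isometry (c r : ℝ) (hr : 0 < r) : Isometry (circGeo c r hr) := by
  refine Isometry.of_dist_eq fun s t => ?_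
  have key : Real.cosh (dist (circGeo c r hr s) (circGeo c r hr t)) = Real.cosh (s - t) := by
    rw [UpperHalfPlane.cosh_dist, Real.cosh_sub]
    have hs := Real.cosh_pos s
    have ht := Real.cosh_pos t
    have e1 : Real.cosh s ^ 2 = Real.sinh s ^ 2 + 1 := Real.cosh_sq s
    have e2 : Real.cosh t ^ 2 = Real.sinh t ^ 2 + 1 := Real.cosh_sq t
    have hd : dist ((circGeo c r hr s) : ℂ) ((circGeo c r hr t) : ℂ) ^ 2
        = ((c - r * Real.tanh s) - (c - r * Real.tanh t)) ^ 2
          + (r / Real.cosh s - r / Real.cosh t) ^ 2 := by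
      rw [Complex.dist_eq_re_im, Real.sq_sqrt (by positivity)]
      rfl
    have him_s : (circGeo c r hr s).im = r / Real.cosh s := rfl
    have him_t : (circGeo c r hr t).im = r / Real.cosh t := rfl
    rw [hd, him_s, him_t, Real.tanh_eq_sinh_div_cosh, Real.tanh_eq_sinh_div_cosh]
    field_simp
    linear_combination (-1 * Real.cosh t ^ 2 * r ^ 2) * e1 +
      (-1 * Real.cosh s ^ 2 * r ^ 2) * e2
  have h1 : |dist (circGeo c r hr s) (circGeo c r hr t)| = |s - t| :=
    Real.cosh_strictMonoOn.injOn (Set.mem_Ici.mpr (abs_nonneg _)) (Set.mem_Ici.mpr (abs_nonneg _))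
      (by rw [Real.cosh_abs, Real.cosh_abs, key])
  rw [Real.dist_eq, ← h1, abs_of_nonneg dist_nonneg]

/-- A point of the circle of center `c ∈ ℝ` and radius `r` lying in the upper half-plane
is in the range of `circGeo c r`. -/
theorem circGeo_surj {c r : ℝ} (hr : 0 < r) (z : ℍ)
    (hz : (z.re - c) ^ 2 + z.im ^ 2 = r ^ 2) :
    ∃ s : ℝ, circGeo c r hr s = z := by
  have him := z.im_pos
  refine ⟨Real.arsinh ((c - z.re) / z.im), ?_⟩
  have hsinh : Real.sinh (Real.arsinh ((c - z.re) / z.im)) = (c - z.re) / z.im :=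
    Real.sinh_arsinh _
  have hcosh : Real.cosh (Real.arsinh ((c - z.re) / z.im)) = r / z.im := by
    rw [Real.cosh_arsinh]
    rw [show (1 : ℝ) + ((c - z.re) / z.im) ^ 2 = (r / z.im) ^ 2 by
      field_simp; nlinarith [hz]]
    exact Real.sqrt_sq (by positivity)
  have hcoshpos := Real.cosh_pos (Real.arsinh ((c - z.re) / z.im))
  refine UpperHalfPlane.ext (Complex.ext ?_ ?_) <;>
    simp only [circGeo, UpperHalfPlane.mk, Real.tanh_eq_sinh_div_cosh, hsinh, hcosh]
  · show c - r * ((c - z.re) / z.im / (r / z.im)) = z.re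
    field_simp
    ring
  · show r / (r / z.im) = z.im
    field_simp

/-- Reparametrize an isometric line through two points to a unit-speed geodesic from the
first to the second. -/
theorem exists_geodesic_of_line {γ0 : ℝ → ℍ} (h : Isometry γ0) {a b : ℝ} {z w : ℍ}
    (ha : γ0 a = z) (hb : γ0 b = w) :
    ∃ γ : ℝ → ℍ, Isometry γ ∧ γ 0 = z ∧ γ (dist z w) = w := by
  have hd : dist z w = |b - a| := by
    rw [← ha, ← hb, h.dist_eq, Real.dist_eq, abs_sub_comm]
  rcases le_total a b with hab | hab
  · refine ⟨fun s => γ0 (a + s), ?_, by simpa using ha, ?_⟩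
    · exact h.comp (Isometry.of_dist_eq fun s t => by simp [Real.dist_eq])
    · rw [hd, abs_of_nonneg (by linarith)]
      simpa using hb
  · refine ⟨fun s => γ0 (a - s), ?_, by simpa using ha, ?_⟩
    · refine h.comp (Isometry.of_dist_eq fun s t => ?_)
      rw [Real.dist_eq, Real.dist_eq]
      rw [show a - s - (a - t) = -(s - t) by ring, abs_neg]
    · rw [hd, abs_of_nonpos (by linarith)]
      simpa using hb

/-- Between any two points of the upper half-plane there is a unit-speed geodesic line. -/
theorem exists_geodesic (z w : ℍ) :
    ∃ γ : ℝ → ℍ, Isometry γ ∧ γ 0 = z ∧ γ (dist z w) = w := by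
  rcases eq_or_ne z.re w.re with hre | hre
  · -- vertical geodesic
    refine exists_geodesic_of_line (UpperHalfPlane.isometry_vertical_line z.re)
      (a := Real.log z.im) (b := Real.log w.im) ?_ ?_
    · exact UpperHalfPlane.ext (Complex.ext rfl (Real.exp_log z.im_pos))
    · exact UpperHalfPlane.ext (Complex.ext hre (Real.exp_log w.im_pos))
  · -- circular geodesic
    set c : ℝ := (w.re ^ 2 + w.im ^ 2 - z.re ^ 2 - z.im ^ 2) / (2 * (w.re - z.re)) with hc
    set r : ℝ := Real.sqrt ((z.re - c) ^ 2 + z.im ^ 2) with hrdef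
    have him := z.im_pos
    have him' := w.im_pos
    have hr : 0 < r := Real.sqrt_pos.mpr (by positivity)
    have hrz : (z.re - c) ^ 2 + z.im ^ 2 = r ^ 2 :=
      (Real.sq_sqrt (by positivity)).symm
    have hrw : (w.re - c) ^ 2 + w.im ^ 2 = r ^ 2 := by
      rw [← hrz, hc]
      have : w.re - z.re ≠ 0 := sub_ne_zero.mpr hre.symm
      field_simp
      ring
    obtain ⟨a, ha⟩ := circGeo_surj hr z hrz
    obtain ⟨b, hb⟩ := circGeo_surj hr w hrw
    exact exists_geodesic_of_line (circGeo_isometry c r hr) ha hb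

/-- Star-shapedness: every point strictly closer to `q` than to `p` can be joined to `q`
within the region of such points. -/
theorem joinedIn_closer (p q z : ℍ) (hz : dist z q < dist z p) :
    JoinedIn {x : ℍ | dist x q < dist x p} z q := by
  obtain ⟨γ, hγ, hγ0, hγd⟩ := exists_geodesic z q
  set d : ℝ := dist z q with hdd
  have hd0 : 0 ≤ d := dist_nonneg
  refine ⟨⟨⟨fun t => γ ((t : ℝ) * d), ?_⟩, by simp [hγ0], by simp [hγd]⟩, ?_⟩
  · exact hγ.continuous.comp (continuous_subtype_val.mul continuous_const)
  · intro t
    have ht0 : (0 : ℝ) ≤ t := t.2.1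
    have ht1 : (t : ℝ) ≤ 1 := t.2.2
    simp only [Path.coe_mk_mk, mem_setOf_eq]
    have h1 : dist (γ ((t : ℝ) * d)) q = (1 - (t : ℝ)) * d := by
      rw [← hγd, hγ.dist_eq, Real.dist_eq, abs_of_nonpos (by nlinarith)]
      ring
    have h2 : dist (γ ((t : ℝ) * d)) z = (t : ℝ) * d := by
      rw [← hγ0, hγ.dist_eq, Real.dist_eq, abs_of_nonneg (by nlinarith)]
      ring
    have h3 : dist z p ≤ dist z (γ ((t : ℝ) * d)) + dist (γ ((t : ℝ) * d)) p :=
      dist_triangle _ _ _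
    rw [dist_comm z (γ ((t : ℝ) * d)), h2] at h3
    rw [h1]
    nlinarith

end BisectorAux

/-- The complement of a bisector has exactly two connected components, one containing `o`
and one containing `λ`; a point lies in the component of `λ` iff it is strictly closer to
`λ` than to `o`. -/
theorem bisector_complement_two_components
    (l : ℍ) (hl : l ≠ o) :
    o ∈ (bisector l)ᶜ ∧ l ∈ (bisector l)ᶜ ∧
    connectedComponentIn (bisector l)ᶜ o ≠ connectedComponentIn (bisector l)ᶜ l ∧
    connectedComponentIn (bisector l)ᶜ o ∪ connectedComponentIn (bisector l)ᶜ l =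
      (bisector l)ᶜ ∧
    ∀ z ∈ (bisector l)ᶜ,
      (z ∈ connectedComponentIn (bisector l)ᶜ l ↔ dist z l < dist z o) := by
  classical
  set A : Set ℍ := {z : ℍ | dist z o < dist z l} with hA
  set B : Set ℍ := {z : ℍ | dist z l < dist z o} with hB
  have hAopen : IsOpen A :=
    isOpen_lt (Continuous.dist continuous_id continuous_const)
      (Continuous.dist continuous_id continuous_const)
  have hBopen : IsOpen B :=
    isOpen_lt (Continuous.dist continuous_id continuous_const)
      (Continuous.dist continuous_id continuous_const)
  have hdisj : Disjoint A B := by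
    rw [Set.disjoint_left]
    intro x hx hx'
    have h1 : dist x o < dist x l := hx
    have h2 : dist x l < dist x o := hx'
    exact absurd (h1.trans h2) (lt_irrefl _)
  have hcompl : (bisector l)ᶜ = A ∪ B := by
    ext x
    simp only [bisector, mem_compl_iff, mem_setOf_eq, mem_union, hA, hB, mem_setOf_eq]
    constructor
    · intro h; exact (lt_or_gt_of_ne h).elim Or.inl Or.inr
    · rintro (h | h) <;> [exact ne_of_lt h; exact ne_of_gt h]
  have hlo : 0 < dist l o := dist_pos.mpr hl
  have hol : 0 < dist o l := dist_pos.mpr fun h => hl h.symm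
  have hoA : o ∈ A := by simp [hA, hol]
  have hlB : B.Nonempty := ⟨l, by simp [hB, hlo]⟩
  have hlB' : l ∈ B := by simp [hB, hlo]
  have hAsub : A ⊆ (bisector l)ᶜ := hcompl ▸ subset_union_left
  have hBsub : B ⊆ (bisector l)ᶜ := hcompl ▸ subset_union_right
  -- path-connectedness of A and B
  have hBpc : IsPathConnected B := by
    refine ⟨l, hlB', fun {y} hy => ?_⟩
    exact (BisectorAux.joinedIn_closer o l y hy).symm
  have hApc : IsPathConnected A := by
    refine ⟨o, hoA, fun {y} hy => ?_⟩
    exact (BisectorAux.joinedIn_closer l o y hy).symm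
  -- identification of the connected components
  have hcompB : connectedComponentIn (bisector l)ᶜ l = B := by
    apply Subset.antisymm
    · have hsub : connectedComponentIn (bisector l)ᶜ l ⊆ A ∪ B :=
        hcompl ▸ connectedComponentIn_subset _ _
      have hprec := isPreconnected_connectedComponentIn
        (x := l) (F := (bisector l)ᶜ)
      rcases hprec.subset_or_subset hAopen hBopen hdisj hsub with h | h
      · exfalso
        have h1 : dist l o < dist l l := h (mem_connectedComponentIn (hBsub hlB'))
        simp at h1
        exact absurd h1 (not_lt.mpr dist_nonneg)
      · exact h
    · exact hBpc.isConnected.isPreconnected.subset_connectedComponentIn hlB' hBsub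
  have hcompA : connectedComponentIn (bisector l)ᶜ o = A := by
    apply Subset.antisymm
    · have hsub : connectedComponentIn (bisector l)ᶜ o ⊆ A ∪ B :=
        hcompl ▸ connectedComponentIn_subset _ _
      have hprec := isPreconnected_connectedComponentIn
        (x := o) (F := (bisector l)ᶜ)
      rcases hprec.subset_or_subset hAopen hBopen hdisj hsub with h | h
      · exact h
      · exfalso
        have h1 : dist o l < dist o o := h (mem_connectedComponentIn (hAsub hoA))
        simp at h1
        exact absurd h1 (not_lt.mpr dist_nonneg)
    · exact hApc.isConnected.isPreconnected.subset_connectedComponentIn hoA hAsub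
  refine ⟨hAsub hoA, hBsub hlB', ?_, ?_, ?_⟩
  · rw [hcompA, hcompB]
    intro h
    have hlA : l ∈ A := h.symm ▸ hlB'
    have h1 : dist l o < dist l l := hlA
    simp at h1
    exact absurd h1 (not_lt.mpr dist_nonneg)
  · rw [hcompA, hcompB, hcompl]
  · intro z hz
    rw [hcompB]
    exact Iff.rfl
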